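/- arXiv:2302.00835 — 3 statements merged into one kernel-verified Lean document; each statement's English description precedes it below -/
import Mathlib

section
/- If T is a tree with diameter d (measured in edges) and A is a real symmetric matrix whose underlying graph is T, then A has at least d+1 distinct eigenvalues. -/
open Matrix Polynomial

/-- A real symmetric matrix `A` has underlying graph `G` if for `i ≠ j`,
`A i j ≠ 0` iff `ij` is an edge of `G`. -/
def MatchesGraph {α : Type*} (A : Matrix α α ℝ) (G : SimpleGraph α) : Prop :=
  ∀ i j, i ≠ j → (A i j ≠ 0 ↔ G.Adj i j)

/-- The set of distinct (real) eigenvalues of a matrix, as roots of its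
characteristic polynomial. -/
noncomputable def distEig {α : Type*} [Fintype α] [DecidableEq α]
    (A : Matrix α α ℝ) : Finset ℝ :=
  A.charpoly.roots.toFinset

/-- `G` has diameter `d` (number of edges of a longest shortest path). -/
def HasDiamG {α : Type*} (G : SimpleGraph α) (d : ℕ) : Prop :=
  (∃ u v, G.dist u v = d) ∧ ∀ u v, G.dist u v ≤ d

section Graph
variable {V : Type*} {G : SimpleGraph V}

lemma exists_adj_dist (hc : G.Connected) {u v : V} {k : ℕ} (h : G.dist u v = k + 1) :
    ∃ w, G.Adj u w ∧ G.dist w v = k := by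
  obtain ⟨p, hp⟩ := hc.exists_walk_length_eq_dist u v
  rw [h] at hp
  cases p with
  | nil => simp at hp
  | @cons _ w _ hadj q =>
    simp only [SimpleGraph.Walk.length_cons, Nat.add_left_inj] at hp
    refine ⟨w, hadj, le_antisymm (hp ▸ SimpleGraph.dist_le q) ?_⟩
    have h1 : G.dist u w = 1 := SimpleGraph.dist_eq_one_iff_adj.mpr hadj
    have := hc.dist_triangle (u := u) (v := w) (w := v)
    omega

lemma unique_adj_dist (hT : G.IsTree) {u v w₁ w₂ : V} {k : ℕ} (h : G.dist u v = k + 1)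
    (h1 : G.Adj u w₁) (h2 : G.Adj u w₂) (d1 : G.dist w₁ v = k) (d2 : G.dist w₂ v = k) :
    w₁ = w₂ := by
  obtain ⟨q₁, hq₁⟩ := (hT.isConnected.exists_walk_length_eq_dist w₁ v)
  obtain ⟨q₂, hq₂⟩ := (hT.isConnected.exists_walk_length_eq_dist w₂ v)
  have hp₁ : (SimpleGraph.Walk.cons h1 q₁).IsPath := by
    apply SimpleGraph.Walk.isPath_of_length_eq_dist
    simp [hq₁, d1, h]
  have hp₂ : (SimpleGraph.Walk.cons h2 q₂).IsPath := by
    apply SimpleGraph.Walk.isPath_of_length_eq_dist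
    simp [hq₂, d2, h]
  obtain ⟨p, -, hup⟩ := hT.existsUnique_path u v
  have e : SimpleGraph.Walk.cons h1 q₁ = SimpleGraph.Walk.cons h2 q₂ :=
    (hup _ hp₁).trans (hup _ hp₂).symm
  have : (SimpleGraph.Walk.cons h1 q₁).getVert 1 = (SimpleGraph.Walk.cons h2 q₂).getVert 1 := by
    rw [e]
  simpa [SimpleGraph.Walk.getVert_cons_succ, SimpleGraph.Walk.getVert_zero] using this

lemma exists_pair_dist (hc : G.Connected) {d : ℕ} (hd : ∃ u v : V, G.dist u v = d)
    {k : ℕ} (hk : k ≤ d) : ∃ u v : V, G.dist u v = k := by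
  obtain ⟨j, rfl⟩ : ∃ j, d = k + j := ⟨d - k, by omega⟩
  clear hk
  induction j with
  | zero => simpa using hd
  | succ j ih =>
    apply ih
    obtain ⟨u, v, huv⟩ := hd
    obtain ⟨w, -, hw⟩ := exists_adj_dist hc (k := k + j) (by omega : G.dist u v = (k + j) + 1)
    exact ⟨w, v, hw⟩

end Graph

section Pow
variable {n : ℕ} {G : SimpleGraph (Fin n)} {A : Matrix (Fin n) (Fin n) ℝ}

lemma pow_apply_eq_zero_of_lt_dist (hc : G.Connected) (hAG : MatchesGraph A G) :
    ∀ (k : ℕ) (u v : Fin n), k < G.dist u v → (A ^ k) u v = 0 := by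
  intro k
  induction k with
  | zero =>
    intro u v h
    have huv : u ≠ v := by rintro rfl; simp [SimpleGraph.dist_self] at h
    simp [Matrix.one_apply, huv]
  | succ k ih =>
    intro u v h
    rw [pow_succ', Matrix.mul_apply]
    apply Finset.sum_eq_zero
    intro w _
    by_cases hw : A u w = 0
    · simp [hw]
    by_cases huw : u = w
    · subst huw; rw [ih u v (by omega), mul_zero]
    have hadj : G.Adj u w := (hAG u w huw).mp hw
    have h1 : G.dist u w = 1 := SimpleGraph.dist_eq_one_iff_adj.mpr hadj
    have := hc.dist_triangle (u := u) (v := w) (w := v)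
    rw [ih w v (by omega), mul_zero]

lemma pow_apply_ne_zero_of_dist (hT : G.IsTree) (hAG : MatchesGraph A G) :
    ∀ (k : ℕ) (u v : Fin n), G.dist u v = k → (A ^ k) u v ≠ 0 := by
  have hc := hT.isConnected
  intro k
  induction k with
  | zero =>
    intro u v h
    obtain rfl : u = v := (hc.dist_eq_zero_iff).mp h
    simp
  | succ k ih =>
    intro u v h
    obtain ⟨w, hadj, hwv⟩ := exists_adj_dist hc h
    rw [pow_succ', Matrix.mul_apply, Finset.sum_eq_single w]
    · exact mul_ne_zero ((hAG u w hadj.ne).mpr hadj) (ih w v hwv)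
    · intro x _ hx
      by_cases hAx : A u x = 0
      · simp [hAx]
      by_cases hux : u = x
      · subst hux
        rw [pow_apply_eq_zero_of_lt_dist hc hAG k u v (by omega), mul_zero]
      have hadjx : G.Adj u x := (hAG u x hux).mp hAx
      have h1 : G.dist u x = 1 := SimpleGraph.dist_eq_one_iff_adj.mpr hadjx
      have ht := hc.dist_triangle (u := u) (v := x) (w := v)
      rcases lt_or_eq_of_le (show k ≤ G.dist x v by omega) with hlt | heq
      · rw [pow_apply_eq_zero_of_lt_dist hc hAG k x v hlt, mul_zero]
      · exact absurd (unique_adj_dist hT h hadjx hadj heq.symm hwv) hx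
    · intro hw; exact absurd (Finset.mem_univ w) hw

end Pow

section Alg
variable {R : Type*} [CommRing R] {m : ℕ}

lemma charpoly_conj_aux (U B V : Matrix (Fin m) (Fin m) R) (h : U * V = 1) :
    (U * B * V).charpoly = B.charpoly := by
  have h' : (C : R →+* R[X]).mapMatrix U * (C : R →+* R[X]).mapMatrix V = 1 := by
    rw [← _root_.map_mul, h, _root_.map_one]
  have hcm : charmatrix (U * B * V) =
      (C : R →+* R[X]).mapMatrix U * charmatrix B * (C : R →+* R[X]).mapMatrix V := by
    rw [charmatrix, charmatrix, _root_.map_mul ((C : R →+* R[X]).mapMatrix) (U * B),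
      _root_.map_mul ((C : R →+* R[X]).mapMatrix) U B, mul_sub, sub_mul]
    congr 1
    have hsc := (Matrix.scalar_commute (n := Fin m) (X : R[X]) (fun r' => Commute.all _ _)
      ((C : R →+* R[X]).mapMatrix U)).eq
    rw [← hsc, mul_assoc, h', mul_one]
  rw [Matrix.charpoly, Matrix.charpoly, hcm, Matrix.det_mul, Matrix.det_mul]
  have h2 : ((C : R →+* R[X]).mapMatrix U).det * ((C : R →+* R[X]).mapMatrix V).det = 1 := by
    rw [← Matrix.det_mul, h', Matrix.det_one]
  calc ((C : R →+* R[X]).mapMatrix U).det * (charmatrix B).det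
        * ((C : R →+* R[X]).mapMatrix V).det
      = (charmatrix B).det * (((C : R →+* R[X]).mapMatrix U).det
        * ((C : R →+* R[X]).mapMatrix V).det) := by ring
    _ = (charmatrix B).det := by rw [h2, mul_one]

lemma conj_pow_aux (U B V : Matrix (Fin m) (Fin m) R) (h : U * V = 1) (h' : V * U = 1) (k : ℕ) :
    (U * B * V) ^ k = U * B ^ k * V := by
  induction k with
  | zero => simp [h]
  | succ k ih =>
    rw [pow_succ, ih, pow_succ]
    have : U * B ^ k * V * (U * B * V) = U * B ^ k * ((V * U) * (B * V)) := by
      simp only [mul_assoc]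
    rw [this, h', one_mul, ← mul_assoc, ← mul_assoc]

lemma aeval_conj_aux (U B V : Matrix (Fin m) (Fin m) R) (h : U * V = 1) (h' : V * U = 1)
    (p : R[X]) : aeval (U * B * V) p = U * aeval B p * V := by
  induction p using Polynomial.induction_on' with
  | add p q hp hq => rw [map_add, map_add, hp, hq, mul_add, add_mul]
  | monomial k a =>
    rw [aeval_monomial, aeval_monomial, conj_pow_aux U B V h h', Algebra.algebraMap_eq_smul_one]
    simp only [smul_one_mul, Matrix.smul_mul, Matrix.mul_smul]

end Alg

section Spec
variable {m : ℕ} {A : Matrix (Fin m) (Fin m) ℝ} (hA : A.IsHermitian)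

lemma diag_eq : Matrix.diagonal (RCLike.ofReal ∘ hA.eigenvalues) = Matrix.diagonal hA.eigenvalues := by
  rw [RCLike.ofReal_real_eq_id, Function.id_comp]

lemma herm_charpoly : A.charpoly = ∏ i, (X - C (hA.eigenvalues i)) := by
  have hU := (Matrix.mem_unitaryGroup_iff).mp (hA.eigenvectorUnitary).2
  have hsp := hA.spectral_theorem
  rw [diag_eq, Unitary.conjStarAlgAut_apply] at hsp
  calc A.charpoly = ((hA.eigenvectorUnitary : Matrix (Fin m) (Fin m) ℝ) *
        Matrix.diagonal hA.eigenvalues * (star (hA.eigenvectorUnitary : Matrix (Fin m) (Fin m) ℝ))).charpoly := by rw [← hsp]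
    _ = (Matrix.diagonal hA.eigenvalues).charpoly := charpoly_conj_aux _ _ _ hU
    _ = ∏ i, (X - C (hA.eigenvalues i)) := by
        rw [Matrix.charpoly_of_upperTriangular _ (Matrix.blockTriangular_diagonal _)]
        simp

lemma herm_aeval_prod_eq_zero :
    aeval A (∏ μ ∈ Finset.image hA.eigenvalues Finset.univ, (X - C μ)) = 0 := by
  have hU := (Matrix.mem_unitaryGroup_iff).mp (hA.eigenvectorUnitary).2
  have hU' := (Matrix.mem_unitaryGroup_iff').mp (hA.eigenvectorUnitary).2
  have hsp := hA.spectral_theorem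
  rw [diag_eq, Unitary.conjStarAlgAut_apply] at hsp
  set q : ℝ[X] := ∏ μ ∈ Finset.image hA.eigenvalues Finset.univ, (X - C μ) with hq
  have hdiag : aeval (Matrix.diagonal hA.eigenvalues) q = 0 := by
    have h1 : aeval (Matrix.diagonalAlgHom ℝ hA.eigenvalues) q
        = Matrix.diagonalAlgHom ℝ (aeval hA.eigenvalues q) := aeval_algHom_apply _ _ _
    have h2 : aeval hA.eigenvalues q = 0 := by
      funext i
      have h3 : (Pi.evalAlgHom ℝ (fun _ => ℝ) i) ((aeval hA.eigenvalues) q) = 0 := by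
        rw [← aeval_algHom_apply, hq, map_prod]
        apply Finset.prod_eq_zero (Finset.mem_image_of_mem hA.eigenvalues (Finset.mem_univ i))
        simp
      exact h3
    rw [h2, map_zero] at h1
    exact h1
  rw [hsp, aeval_conj_aux _ _ _ hU hU', hdiag, mul_zero, zero_mul]

end Spec

theorem stmt0 {n d : ℕ} (G : SimpleGraph (Fin n)) (hT : G.IsTree) (hd : HasDiamG G d)
    (A : Matrix (Fin n) (Fin n) ℝ) (hA : A.IsSymm) (hAG : MatchesGraph A G) :
    d + 1 ≤ (distEig A).card := by
  classical
  have hc := hT.isConnected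
  have hherm : A.IsHermitian := by
    show Aᴴ = A
    ext i j
    simpa [Matrix.conjTranspose_apply] using congrFun (congrFun hA i) j
  set f := hherm.eigenvalues with hf
  set s := Finset.image f Finset.univ with hs
  have hchar := herm_charpoly hherm
  have hroots : A.charpoly.roots = Finset.univ.val.map f := by
    rw [hchar]
    have hprod : (∏ i, (X - C (f i))) =
        ((Finset.univ.val.map f).map (fun a : ℝ => X - C a)).prod := by
      rw [Multiset.map_map]
      rfl
    rw [hprod, Polynomial.roots_multiset_prod_X_sub_C]
  have hdE : distEig A = s := by
    rw [distEig, hroots]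
    ext x
    simp only [Multiset.mem_toFinset, Multiset.mem_map, hs, Finset.mem_image]
    constructor
    · rintro ⟨i, -, rfl⟩; exact ⟨i, Finset.mem_univ i, rfl⟩
    · rintro ⟨i, -, rfl⟩; exact ⟨i, Finset.mem_univ i, rfl⟩
  have hint : IsIntegral ℝ A := Algebra.IsIntegral.isIntegral A
  set p := minpoly ℝ A with hp
  have hmono : p.Monic := minpoly.monic hint
  have hdvd : p ∣ ∏ μ ∈ s, (X - C μ) := minpoly.dvd ℝ A (herm_aeval_prod_eq_zero hherm)
  have hqmonic : (∏ μ ∈ s, (X - C μ)).Monic :=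
    monic_prod_of_monic _ _ (fun μ _ => monic_X_sub_C μ)
  have hdeg : p.natDegree ≤ s.card := by
    have h1 := Polynomial.natDegree_le_of_dvd hdvd hqmonic.ne_zero
    rwa [Polynomial.natDegree_prod _ _ (fun μ _ => X_sub_C_ne_zero μ), Finset.sum_congr rfl
      (fun μ _ => natDegree_X_sub_C μ), Finset.sum_const, smul_eq_mul, mul_one] at h1
  have hkey : d + 1 ≤ p.natDegree := by
    by_contra hcon
    push_neg at hcon
    obtain ⟨u, v, huv⟩ := exists_pair_dist hc hd.1 (show p.natDegree ≤ d by omega)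
    have hz : (aeval A p) u v = 0 := by rw [hp, minpoly.aeval]; rfl
    rw [aeval_eq_sum_range] at hz
    have hz2 : ∑ i ∈ Finset.range (p.natDegree + 1), p.coeff i * (A ^ i) u v = 0 := by
      simpa [Matrix.sum_apply, Matrix.smul_apply, smul_eq_mul] using hz
    rw [Finset.sum_range_succ] at hz2
    have hlow : ∀ i ∈ Finset.range p.natDegree, p.coeff i * (A ^ i) u v = 0 := by
      intro i hi
      rw [pow_apply_eq_zero_of_lt_dist hc hAG i u v
        (by rw [huv]; exact Finset.mem_range.mp hi), mul_zero]
    rw [Finset.sum_eq_zero hlow, zero_add, hmono.coeff_natDegree, one_mul] at hz2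
    exact pow_apply_ne_zero_of_dist hT hAG _ u v huv hz2
  rw [hdE]
  exact hkey.trans hdeg
end

section
/- Let T be a tree and M a real symmetric matrix whose underlying graph is T. Then the smallest eigenvalue of M has multiplicity 1, and the largest eigenvalue of M has multiplicity 1. -/
open Matrix Polynomial

/-- The multiplicity of `lam` as an eigenvalue of `A` (root multiplicity in the
characteristic polynomial). -/
noncomputable def multEig {α : Type*} [Fintype α] [DecidableEq α]
    (A : Matrix α α ℝ) (lam : ℝ) : ℕ :=
  A.charpoly.rootMultiplicity lam

section Aux
open SimpleGraph
open Matrix Polynomial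

variable {n : ℕ}

lemma scalarX_eq : (Matrix.scalar (Fin n) (X : ℝ[X])) = (X : ℝ[X]) • (1 : Matrix (Fin n) (Fin n) ℝ[X]) := by
  rw [Matrix.smul_one_eq_diagonal]; rfl

lemma charpoly_unitary_conj (U A : Matrix (Fin n) (Fin n) ℝ)
    (hU : U ∈ Matrix.unitaryGroup (Fin n) ℝ) :
    (U * A * star U).charpoly = A.charpoly := by
  have hUV : U * star U = 1 := (Matrix.mem_unitaryGroup_iff).mp hU
  have hVU : star U * U = 1 := (Matrix.mem_unitaryGroup_iff').mp hU
  have hmap : U.map C * (star U).map C = 1 := by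
    rw [← Matrix.map_mul, hUV]; simp
  have key : charmatrix (U * A * star U) =
      U.map C * charmatrix A * (star U).map C := by
    rw [charmatrix, charmatrix]
    rw [mul_sub, sub_mul]
    congr 1
    · rw [scalarX_eq, mul_smul_comm, smul_mul_assoc, mul_one, hmap]
    · simp only [RingHom.mapMatrix_apply]
      rw [← Matrix.map_mul, ← Matrix.map_mul]
  rw [Matrix.charpoly, Matrix.charpoly, key, Matrix.det_mul, Matrix.det_mul, mul_comm,
    ← mul_assoc, ← Matrix.det_mul, ← Matrix.map_mul, hVU]
  simp

lemma charpoly_diagonal_real (d : Fin n → ℝ) :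
    (Matrix.diagonal d).charpoly = ∏ i, (X - C (d i)) := by
  rw [Matrix.charpoly]
  have : charmatrix (Matrix.diagonal d) = Matrix.diagonal (fun i => X - C (d i)) := by
    ext i j
    by_cases h : i = j
    · subst h; simp
    · simp [h, Matrix.diagonal_apply_ne _ h]
  rw [this, Matrix.det_diagonal]

lemma charpoly_eq_prod (A : Matrix (Fin n) (Fin n) ℝ) (hA : A.IsHermitian) :
    A.charpoly = ∏ i, (X - C (hA.eigenvalues i)) := by
  conv_lhs => rw [hA.spectral_theorem, Unitary.conjStarAlgAut_apply]
  rw [charpoly_unitary_conj _ _ (hA.eigenvectorUnitary).2]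
  have : Matrix.diagonal (RCLike.ofReal ∘ hA.eigenvalues) = Matrix.diagonal hA.eigenvalues := by
    simp [Function.comp]
  rw [this, charpoly_diagonal_real]

lemma roots_charpoly (A : Matrix (Fin n) (Fin n) ℝ) (hA : A.IsHermitian) :
    A.charpoly.roots = (Finset.univ.val.map hA.eigenvalues) := by
  rw [charpoly_eq_prod A hA]
  have : ∏ i, (X - C (hA.eigenvalues i)) =
      ((Finset.univ.val.map hA.eigenvalues).map (fun a => X - C a)).prod := by
    rw [Multiset.map_map]; rfl
  rw [this, Polynomial.roots_multiset_prod_X_sub_C]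
open Matrix Polynomial

variable {n : ℕ}

lemma dot_eig (A : Matrix (Fin n) (Fin n) ℝ) (hA : A.IsHermitian) (x : Fin n → ℝ) :
    ∃ y : Fin n → ℝ, y ⬝ᵥ y = x ⬝ᵥ x ∧
      x ⬝ᵥ (A *ᵥ x) = ∑ i, hA.eigenvalues i * (y i * y i) := by
  classical
  set U : Matrix (Fin n) (Fin n) ℝ := (hA.eigenvectorUnitary : Matrix (Fin n) (Fin n) ℝ) with hU
  have hUV : U * star U = 1 := (Matrix.mem_unitaryGroup_iff).mp hA.eigenvectorUnitary.2
  set y : Fin n → ℝ := star U *ᵥ x with hy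
  have hxU : vecMul x U = y := by
    rw [hy, Matrix.star_eq_conjTranspose, Matrix.conjTranspose_eq_transpose_of_trivial,
      Matrix.mulVec_transpose]
  refine ⟨y, ?_, ?_⟩
  · calc (star U *ᵥ x) ⬝ᵥ (star U *ᵥ x) = vecMul x U ⬝ᵥ (star U *ᵥ x) := by rw [hxU]
    _ = x ⬝ᵥ (U *ᵥ (star U *ᵥ x)) := (Matrix.dotProduct_mulVec x U _).symm
    _ = x ⬝ᵥ x := by rw [Matrix.mulVec_mulVec, hUV, Matrix.one_mulVec]
  · conv_lhs => rw [hA.spectral_theorem, Unitary.conjStarAlgAut_apply]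
    have hdiag : Matrix.diagonal (RCLike.ofReal ∘ hA.eigenvalues) = Matrix.diagonal hA.eigenvalues := by
      simp [Function.comp]
    rw [hdiag, ← Matrix.mulVec_mulVec, ← Matrix.mulVec_mulVec, Matrix.dotProduct_mulVec x U, hxU]
    simp only [dotProduct, Matrix.mulVec_diagonal]
    exact Finset.sum_congr rfl (fun i _ => by ring)

lemma rayleigh_le (A : Matrix (Fin n) (Fin n) ℝ) (hA : A.IsHermitian) (lam : ℝ)
    (h : ∀ i, hA.eigenvalues i ≤ lam) (x : Fin n → ℝ) :
    x ⬝ᵥ (A *ᵥ x) ≤ lam * (x ⬝ᵥ x) := by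
  obtain ⟨y, hnorm, hdot⟩ := dot_eig A hA x
  rw [hdot, ← hnorm]
  simp only [dotProduct, Finset.mul_sum]
  exact Finset.sum_le_sum fun i _ => by nlinarith [mul_self_nonneg (y i), h i]

lemma rayleigh_ge (A : Matrix (Fin n) (Fin n) ℝ) (hA : A.IsHermitian) (lam : ℝ)
    (h : ∀ i, lam ≤ hA.eigenvalues i) (x : Fin n → ℝ) :
    lam * (x ⬝ᵥ x) ≤ x ⬝ᵥ (A *ᵥ x) := by
  obtain ⟨y, hnorm, hdot⟩ := dot_eig A hA x
  rw [hdot, ← hnorm]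
  simp only [dotProduct, Finset.mul_sum]
  exact Finset.sum_le_sum fun i _ => by nlinarith [mul_self_nonneg (y i), h i]

lemma rayleigh_eq_eigen (A : Matrix (Fin n) (Fin n) ℝ) (hsym : Aᵀ = A) (lam : ℝ)
    (hRay : ∀ x, x ⬝ᵥ (A *ᵥ x) ≤ lam * (x ⬝ᵥ x)) (y : Fin n → ℝ)
    (hy : y ⬝ᵥ (A *ᵥ y) = lam * (y ⬝ᵥ y)) : A *ᵥ y = lam • y := by
  have key : ∀ z : Fin n → ℝ, z ⬝ᵥ (lam • y - A *ᵥ y) = 0 := by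
    intro z
    set b : ℝ := lam * (y ⬝ᵥ z) - z ⬝ᵥ (A *ᵥ y) with hb
    set c : ℝ := lam * (z ⬝ᵥ z) - z ⬝ᵥ (A *ᵥ z) with hc
    have hc0 : 0 ≤ c := by have := hRay z; rw [hc]; linarith
    have hcross : y ⬝ᵥ (A *ᵥ z) = z ⬝ᵥ (A *ᵥ y) := by
      rw [Matrix.dotProduct_mulVec y A z, ← Matrix.mulVec_transpose, hsym,
        dotProduct_comm]
    have hq : ∀ t : ℝ, 0 ≤ 2 * t * b + t ^ 2 * c := by
      intro t
      have hR := hRay (y + t • z)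
      have e1 : (y + t • z) ⬝ᵥ (A *ᵥ (y + t • z)) =
          y ⬝ᵥ (A *ᵥ y) + t * (z ⬝ᵥ (A *ᵥ y)) + t * (y ⬝ᵥ (A *ᵥ z)) + t^2 * (z ⬝ᵥ (A *ᵥ z)) := by
        rw [Matrix.mulVec_add, Matrix.mulVec_smul]
        simp only [dotProduct_add, add_dotProduct, smul_dotProduct, dotProduct_smul, smul_eq_mul]
        ring
      have e2 : (y + t • z) ⬝ᵥ (y + t • z) = y ⬝ᵥ y + 2 * t * (y ⬝ᵥ z) + t^2 * (z ⬝ᵥ z) := by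
        simp only [dotProduct_add, add_dotProduct, smul_dotProduct, dotProduct_smul, smul_eq_mul]
        rw [dotProduct_comm z y]
        ring
      have e3 : 2 * t * b + t ^ 2 * c =
          lam * ((y + t • z) ⬝ᵥ (y + t • z)) - ((y + t • z) ⬝ᵥ (A *ᵥ (y + t • z))) := by
        rw [hb, hc, e1, e2, hcross, hy]
        ring
      linarith [hR, e3]
    have hb0 : b = 0 := by
      by_contra hb'
      have hc1 : (0:ℝ) < c + 1 := by linarith
      have h1 := hq (-b / (c + 1))
      have h2 : 0 ≤ (2 * (-b/(c+1)) * b + (-b/(c+1))^2 * c) * (c+1)^2 :=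
        mul_nonneg h1 (by positivity)
      have h3 : (2 * (-b/(c+1)) * b + (-b/(c+1))^2 * c) * (c+1)^2
          = -2 * b^2 * (c+1) + b^2 * c := by
        field_simp
      rw [h3] at h2
      have hb2 : 0 < b^2 := by positivity
      nlinarith
    have hzb : z ⬝ᵥ (lam • y - A *ᵥ y) = b := by
      rw [hb]
      simp only [dotProduct_sub, dotProduct_smul, smul_eq_mul]
      rw [dotProduct_comm z y]
    rw [hzb]
    exact hb0
  have h0 := key (lam • y - A *ᵥ y)
  have h1 := dotProduct_self_eq_zero.mp h0
  have := sub_eq_zero.mp h1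
  exact this.symm
open Matrix Polynomial SimpleGraph

variable {n : ℕ}

noncomputable def esgn (M : Matrix (Fin n) (Fin n) ℝ) (i j : Fin n) : ℝ :=
  if 0 < M i j then 1 else -1

noncomputable def wsgn (M : Matrix (Fin n) (Fin n) ℝ) {G : SimpleGraph (Fin n)} {u v : Fin n}
    (w : G.Walk u v) : ℝ :=
  (w.darts.map (fun d => esgn M d.toProd.1 d.toProd.2)).prod

lemma wsgn_cons (M : Matrix (Fin n) (Fin n) ℝ) {G : SimpleGraph (Fin n)} {u v w : Fin n}
    (h : G.Adj u v) (p : G.Walk v w) :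
    wsgn M (Walk.cons h p) = esgn M u v * wsgn M p := by
  simp [wsgn]

lemma wsgn_append (M : Matrix (Fin n) (Fin n) ℝ) {G : SimpleGraph (Fin n)} {u v w : Fin n}
    (p : G.Walk u v) (q : G.Walk v w) :
    wsgn M (p.append q) = wsgn M p * wsgn M q := by
  simp [wsgn, Walk.darts_append]

lemma wsgn_sq (M : Matrix (Fin n) (Fin n) ℝ) {G : SimpleGraph (Fin n)} {u v : Fin n}
    (w : G.Walk u v) : wsgn M w * wsgn M w = 1 := by
  induction w with
  | nil => simp [wsgn]
  | @cons a b c h p ih =>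
    rw [wsgn_cons]
    have he : esgn M a b * esgn M a b = 1 := by
      unfold esgn; split <;> norm_num
    nlinarith [he, ih]

lemma exists_sign (G : SimpleGraph (Fin n)) (hT : G.IsTree) (M : Matrix (Fin n) (Fin n) ℝ)
    (hsym : M.IsSymm) :
    ∃ ε : Fin n → ℝ, (∀ i, ε i * ε i = 1) ∧ ∀ i j, G.Adj i j → 0 ≤ ε i * ε j * M i j := by
  have hne : Nonempty (Fin n) := hT.isConnected.nonempty
  obtain ⟨r⟩ := hne
  have huniq := hT.existsUnique_path r
  set P : (v : Fin n) → G.Walk r v := fun v => (huniq v).choose with hPdef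
  have hP : ∀ v, (P v).IsPath := fun v => (huniq v).choose_spec.1
  have hPu : ∀ (v : Fin n) (q : G.Walk r v), q.IsPath → P v = q := by
    intro v q hq
    exact ((huniq v).unique (hP v) hq)
  refine ⟨fun v => wsgn M (P v), fun v => wsgn_sq M (P v), ?_⟩
  intro i j hadj
  have hesgn_nonneg : ∀ a b : Fin n, 0 ≤ esgn M a b * M a b := by
    intro a b
    unfold esgn
    split
    · next hlt => simp; linarith
    · next hlt => push_neg at hlt; nlinarith
  have hMsymm : M j i = M i j := by
    have := congrFun (congrFun hsym j) i
    simpa [Matrix.transpose_apply] using this.symm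
  have key : wsgn M (P j) = wsgn M (P i) * esgn M i j ∨
      wsgn M (P i) = wsgn M (P j) * esgn M j i := by
    by_cases hj : j ∈ (P i).support
    · right
      have hspec := ((P i).take_spec hj).symm
      have h1 : P j = (P i).takeUntil j hj := hPu j _ ((hP i).takeUntil hj)
      have h2 : (P i).dropUntil j hj = Walk.cons (hadj.symm) Walk.nil := by
        have := hT.IsAcyclic.path_unique
          ⟨(P i).dropUntil j hj, (hP i).dropUntil hj⟩ (Path.singleton (hadj.symm))
        exact congrArg Subtype.val this
      calc wsgn M (P i) = wsgn M (((P i).takeUntil j hj).append ((P i).dropUntil j hj)) := by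
            rw [← hspec]
        _ = wsgn M ((P i).takeUntil j hj) * wsgn M ((P i).dropUntil j hj) := wsgn_append M _ _
        _ = wsgn M (P j) * esgn M j i := by
            rw [h1, h2, wsgn_cons]
            simp [wsgn]
    · left
      have hcpath : ((P i).concat hadj).IsPath := by
        rw [← Walk.isPath_reverse_iff, Walk.reverse_concat]
        refine Walk.IsPath.cons ((Walk.isPath_reverse_iff _).mpr (hP i)) ?_
        rw [Walk.support_reverse, List.mem_reverse]
        exact hj
      have h1 : P j = (P i).concat hadj := hPu j _ hcpath
      rw [h1, Walk.concat_eq_append, wsgn_append, wsgn_cons]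
      simp [wsgn]
  show 0 ≤ wsgn M (P i) * wsgn M (P j) * M i j
  rcases key with h | h
  · rw [h]
    have h1 : wsgn M (P i) * (wsgn M (P i) * esgn M i j) * M i j
        = (wsgn M (P i) * wsgn M (P i)) * (esgn M i j * M i j) := by ring
    rw [h1, wsgn_sq, one_mul]
    exact hesgn_nonneg i j
  · rw [h]
    have h1 : wsgn M (P j) * esgn M j i * wsgn M (P j) * M i j
        = (wsgn M (P j) * wsgn M (P j)) * (esgn M j i * M j i) := by rw [hMsymm]; ring
    rw [h1, wsgn_sq, one_mul]
    exact hesgn_nonneg j i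

variable {n : ℕ}

lemma exists_adj_boundary {G : SimpleGraph (Fin n)} (x : Fin n → ℝ)
    {l k : Fin n} (w : G.Walk l k) : x l ≠ 0 → x k = 0 →
    ∃ i j, G.Adj i j ∧ x i ≠ 0 ∧ x j = 0 := by
  induction w with
  | nil => exact fun h1 h2 => absurd h2 h1
  | @cons a b c h p ih =>
    intro h1 h2
    by_cases hb : x b = 0
    · exact ⟨a, b, h, h1, hb⟩
    · exact ih hb h2

lemma eigen_no_zero (G : SimpleGraph (Fin n)) (hconn : G.Connected)
    (M : Matrix (Fin n) (Fin n) ℝ) (hsym : Mᵀ = M) (hMG : MatchesGraph M G)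
    (ε : Fin n → ℝ) (hε1 : ∀ i, ε i * ε i = 1)
    (hε2 : ∀ i j, G.Adj i j → 0 ≤ ε i * ε j * M i j)
    (lam : ℝ) (hRay : ∀ x, x ⬝ᵥ (M *ᵥ x) ≤ lam * (x ⬝ᵥ x))
    (x : Fin n → ℝ) (hx : M *ᵥ x = lam • x) (hx0 : x ≠ 0) :
    ∀ k, x k ≠ 0 := by
  have hε2' : ∀ i j, i ≠ j → 0 ≤ ε i * ε j * M i j := by
    intro i j hij
    by_cases hadj : G.Adj i j
    · exact hε2 i j hadj
    · have : M i j = 0 := by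
        by_contra hMij
        exact hadj ((hMG i j hij).mp hMij)
      rw [this, mul_zero]
  have habs : ∀ i, |ε i| = 1 := by
    intro i
    rcases mul_self_eq_one_iff.mp (hε1 i) with h | h <;> rw [h] <;> norm_num
  have hsval : ∀ i j, i ≠ j → ε i * ε j * M i j = |M i j| := by
    intro i j hij
    have h1 : |ε i * ε j * M i j| = ε i * ε j * M i j := abs_of_nonneg (hε2' i j hij)
    rw [← h1, abs_mul, abs_mul, habs i, habs j, one_mul, one_mul]
  set y : Fin n → ℝ := fun i => ε i * |x i| with hy
  have hyy : y ⬝ᵥ y = x ⬝ᵥ x := by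
    apply Finset.sum_congr rfl
    intro i _
    show (ε i * |x i|) * (ε i * |x i|) = x i * x i
    calc (ε i * |x i|) * (ε i * |x i|) = (ε i * ε i) * (|x i| * |x i|) := by ring
      _ = x i * x i := by rw [hε1 i, abs_mul_abs_self, one_mul]
  have hterm : ∀ i j, x i * (M i j * x j) ≤ y i * (M i j * y j) := by
    intro i j
    by_cases hij : i = j
    · subst hij
      apply le_of_eq
      show x i * (M i i * x i) = (ε i * |x i|) * (M i i * (ε i * |x i|))
      calc x i * (M i i * x i) = M i i * (x i * x i) := by ring
        _ = M i i * ((ε i * ε i) * (|x i| * |x i|)) := by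
            rw [hε1 i, abs_mul_abs_self, one_mul]
        _ = (ε i * |x i|) * (M i i * (ε i * |x i|)) := by ring
    · calc x i * (M i j * x j) = M i j * (x i * x j) := by ring
        _ ≤ |M i j * (x i * x j)| := le_abs_self _
        _ = |M i j| * (|x i| * |x j|) := by rw [abs_mul, abs_mul]
        _ = (ε i * ε j * M i j) * (|x i| * |x j|) := by rw [hsval i j hij]
        _ = (ε i * |x i|) * (M i j * (ε j * |x j|)) := by ring
  have hxy : x ⬝ᵥ (M *ᵥ x) ≤ y ⬝ᵥ (M *ᵥ y) := by
    simp only [dotProduct, Matrix.mulVec, dotProduct, Finset.mul_sum]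
    exact Finset.sum_le_sum fun i _ => Finset.sum_le_sum fun j _ => hterm i j
  have hlx : x ⬝ᵥ (M *ᵥ x) = lam * (x ⬝ᵥ x) := by
    rw [hx, dotProduct_smul, smul_eq_mul]
  have hyMy : y ⬝ᵥ (M *ᵥ y) = lam * (y ⬝ᵥ y) := by
    refine le_antisymm (hRay y) ?_
    rw [hyy]
    linarith [hxy, hlx]
  have hMy : M *ᵥ y = lam • y := rayleigh_eq_eigen M hsym lam hRay y hyMy
  intro k hk
  obtain ⟨l, hl⟩ := Function.ne_iff.mp hx0
  obtain ⟨w⟩ := hconn.preconnected l k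
  obtain ⟨i, j, hadj, hi, hj⟩ := exists_adj_boundary x w hl hk
  -- row j of the eigen equation for y
  have hyj : y j = 0 := by rw [hy]; simp [hj]
  have hsum : ∑ m, M j m * y m = 0 := by
    have := congrFun hMy j
    simp only [Matrix.mulVec, dotProduct, Pi.smul_apply, smul_eq_mul] at this
    rw [this, hyj, mul_zero]
  have hsum2 : ∑ m, ε j * (M j m * y m) = 0 := by
    rw [← Finset.mul_sum, hsum, mul_zero]
  have hnonneg : ∀ m ∈ Finset.univ, 0 ≤ ε j * (M j m * y m) := by
    intro m _
    by_cases hm : m = j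
    · subst hm
      rw [hyj, mul_zero, mul_zero]
    · have h1 : ε j * (M j m * y m) = (ε j * ε m * M j m) * |x m| := by
        rw [hy]; ring
      rw [h1]
      exact mul_nonneg (hε2' j m (fun h => hm h.symm)) (abs_nonneg _)
  have hzero := (Finset.sum_eq_zero_iff_of_nonneg hnonneg).mp hsum2 i (Finset.mem_univ i)
  have hij : j ≠ i := hadj.ne'
  have h1 : ε j * (M j i * y i) = (ε j * ε i * M j i) * |x i| := by rw [hy]; ring
  rw [h1, hsval j i hij] at hzero
  have hMji : M j i ≠ 0 := (hMG j i hij).mpr hadj.symm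
  have : 0 < |M j i| * |x i| :=
    mul_pos (abs_pos.mpr hMji) (abs_pos.mpr hi)
  rw [hzero] at this
  exact lt_irrefl 0 this

lemma core_no_two (G : SimpleGraph (Fin n)) (hT : G.IsTree)
    (M : Matrix (Fin n) (Fin n) ℝ) (hsymm : M.IsSymm) (hMG : MatchesGraph M G)
    (lam : ℝ) (hRay : ∀ x, x ⬝ᵥ (M *ᵥ x) ≤ lam * (x ⬝ᵥ x))
    (u v : Fin n → ℝ) (hu : M *ᵥ u = lam • u) (hv : M *ᵥ v = lam • v)
    (hu1 : u ⬝ᵥ u = 1) (hv1 : v ⬝ᵥ v = 1) (huv : u ⬝ᵥ v = 0) : False := by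
  obtain ⟨ε, hε1, hε2⟩ := exists_sign G hT M hsymm
  have hnz := eigen_no_zero G hT.isConnected M hsymm hMG ε hε1 hε2 lam hRay
  have hne : Nonempty (Fin n) := hT.isConnected.nonempty
  obtain ⟨k⟩ := hne
  have hune : u ≠ 0 := by
    intro h; rw [h] at hu1; simp at hu1
  have hvne : v ≠ 0 := by
    intro h; rw [h] at hv1; simp at hv1
  by_cases huk : u k = 0
  · exact hnz u hu hune k huk
  by_cases hvk : v k = 0
  · exact hnz v hv hvne k hvk
  set w : Fin n → ℝ := v k • u - u k • v with hw
  have hweig : M *ᵥ w = lam • w := by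
    rw [hw, Matrix.mulVec_sub, Matrix.mulVec_smul, Matrix.mulVec_smul, hu, hv,
      smul_sub, smul_comm (v k) lam, smul_comm (u k) lam]
  have hwk : w k = 0 := by
    rw [hw]; simp [mul_comm]
  have hwne : w ≠ 0 := by
    intro h
    have hdot : w ⬝ᵥ u = v k := by
      rw [hw]
      rw [sub_dotProduct, smul_dotProduct, smul_dotProduct, hu1,
        dotProduct_comm v u, huv]
      simp
    rw [h] at hdot
    simp at hdot
    exact hvk hdot.symm
  exact hnz w hweig hwne k hwk

end Aux

theorem stmt1 {n : ℕ} (G : SimpleGraph (Fin n)) (hT : G.IsTree)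
    (M : Matrix (Fin n) (Fin n) ℝ) (hM : M.IsSymm) (hMG : MatchesGraph M G) :
    (∀ lam ∈ distEig M, (∀ mu ∈ distEig M, lam ≤ mu) → multEig M lam = 1) ∧
    (∀ lam ∈ distEig M, (∀ mu ∈ distEig M, mu ≤ lam) → multEig M lam = 1) := by
  classical
  have hHerm : M.IsHermitian := by
    rwa [Matrix.IsHermitian, Matrix.conjTranspose_eq_transpose_of_trivial]
  set ev := hHerm.eigenvalues with hev
  have hroots : M.charpoly.roots = Finset.univ.val.map ev := roots_charpoly M hHerm
  have hmem : ∀ mu : ℝ, mu ∈ distEig M ↔ ∃ i, ev i = mu := by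
    intro mu
    rw [distEig, Multiset.mem_toFinset, hroots, Multiset.mem_map]
    constructor
    · rintro ⟨a, _, ha⟩; exact ⟨a, ha⟩
    · rintro ⟨a, ha⟩; exact ⟨a, Finset.mem_univ_val _, ha⟩
  have hevmem : ∀ i, ev i ∈ distEig M := fun i => (hmem (ev i)).mpr ⟨i, rfl⟩
  have hcount : ∀ lam : ℝ, multEig M lam =
      (Finset.univ.filter (fun i => lam = ev i)).card := by
    intro lam
    rw [multEig, ← Polynomial.count_roots, hroots, Multiset.count_map]
    rfl
  -- generic finishing step
  have finish : ∀ lam : ℝ,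
      (∀ x : Fin n → ℝ, x ⬝ᵥ (M *ᵥ x) ≤ lam * (x ⬝ᵥ x)) ∨
        (∀ x : Fin n → ℝ, lam * (x ⬝ᵥ x) ≤ x ⬝ᵥ (M *ᵥ x)) →
      (∃ i0, ev i0 = lam) → multEig M lam = 1 := by
    intro lam hRay ⟨i0, hi0⟩
    have huniq : ∀ j1 j2 : Fin n, ev j1 = lam → ev j2 = lam → j1 = j2 := by
      intro j1 j2 h1 h2
      by_contra hne
      set u : Fin n → ℝ := ⇑(hHerm.eigenvectorBasis j1) with hudef
      set v : Fin n → ℝ := ⇑(hHerm.eigenvectorBasis j2) with hvdef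
      have hu : M *ᵥ u = lam • u := by
        rw [hudef, hHerm.mulVec_eigenvectorBasis, ← hev, h1]
      have hv : M *ᵥ v = lam • v := by
        rw [hvdef, hHerm.mulVec_eigenvectorBasis, ← hev, h2]
      have horth := orthonormal_iff_ite.mp hHerm.eigenvectorBasis.orthonormal
      have hu1 : u ⬝ᵥ u = 1 := by
        have h := horth j1 j1
        rw [PiLp.inner_apply] at h
        simpa [dotProduct, hudef, hvdef, sq] using h
      have hv1 : v ⬝ᵥ v = 1 := by
        have h := horth j2 j2
        rw [PiLp.inner_apply] at h
        simpa [dotProduct, hudef, hvdef, sq] using h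
      have huv : u ⬝ᵥ v = 0 := by
        have h := horth j1 j2
        rw [PiLp.inner_apply] at h
        simpa [dotProduct, hudef, hvdef, hne, mul_comm] using h
      rcases hRay with hR | hR
      · exact core_no_two G hT M hM hMG lam hR u v hu hv hu1 hv1 huv
      · -- apply to -M, -lam
        have hsymm' : (-M).IsSymm := by
          rw [Matrix.IsSymm, Matrix.transpose_neg, hM]
        have hMG' : MatchesGraph (-M) G := by
          intro i j hij
          rw [← hMG i j hij]
          simp
        have hR' : ∀ x : Fin n → ℝ, x ⬝ᵥ ((-M) *ᵥ x) ≤ (-lam) * (x ⬝ᵥ x) := by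
          intro x
          rw [Matrix.neg_mulVec, dotProduct_neg]
          linarith [hR x]
        have hu' : (-M) *ᵥ u = (-lam) • u := by
          rw [Matrix.neg_mulVec, hu, neg_smul]
        have hv' : (-M) *ᵥ v = (-lam) • v := by
          rw [Matrix.neg_mulVec, hv, neg_smul]
        exact core_no_two G hT (-M) hsymm' hMG' (-lam) hR' u v hu' hv' hu1 hv1 huv
    rw [hcount]
    have hfilter : Finset.univ.filter (fun i => lam = ev i) = {i0} := by
      apply Finset.eq_singleton_iff_unique_mem.mpr
      constructor
      · simp [hi0]
      · intro j hj
        rw [Finset.mem_filter] at hj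
        exact huniq j i0 hj.2.symm hi0
    rw [hfilter, Finset.card_singleton]
  constructor
  · intro lam hlam hmin
    obtain ⟨i0, hi0⟩ := (hmem lam).mp hlam
    refine finish lam (Or.inr ?_) ⟨i0, hi0⟩
    exact rayleigh_ge M hHerm lam (fun i => hmin (ev i) (hevmem i))
  · intro lam hlam hmax
    obtain ⟨i0, hi0⟩ := (hmem lam).mp hlam
    refine finish lam (Or.inl ?_) ⟨i0, hi0⟩
    exact rayleigh_le M hHerm lam (fun i => hmax (ev i) (hevmem i))
end

section
/- Let T_0,...,T_p (p ≥ 1) be disjoint rooted trees with roots v_0,...,v_p, and let T = T_0 ⊙ (T_1,...,T_p) be the tree obtained by adding edges v_0v_i for i = 1,...,p. Let M be a real symmetric matrix with underlying graph T such that each principal submatrix M[T_i] equals a given symmetric matrix M_i with underlying graph T_i, and each entry M_{v_0 v_i} = δ for a nonzero real δ. Then every eigenvalue λ of any M_ℓ (0 ≤ ℓ ≤ p) satisfies λ_min(M) < λ < λ_max(M). -/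
open Matrix Polynomial

/-- The matrix of the tree `T₀ ⊙ (T₁,…,T_p)`: diagonal blocks `Ms i`, and connecting
entries `δ` between the root `r 0` of `T₀` and the roots `r i` of the other trees. -/
noncomputable def odotMat {p : ℕ} {V : Fin (p + 1) → Type} [∀ i, DecidableEq (V i)]
    (Ms : ∀ i, Matrix (V i) (V i) ℝ) (r : ∀ i, V i) (δ : ℝ) :
    Matrix (Σ i, V i) (Σ i, V i) ℝ := fun a b =>
  if h : a.1 = b.1 then Ms b.1 (h ▸ a.2) b.2
  else if a = ⟨0, r 0⟩ ∧ b.2 = r b.1 then δ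
  else if b = ⟨0, r 0⟩ ∧ a.2 = r a.1 then δ
  else 0

/-- `y` is the smallest eigenvalue of `A`. -/
def IsLamMin {α : Type*} [Fintype α] [DecidableEq α] (A : Matrix α α ℝ) (y : ℝ) : Prop :=
  A.charpoly.IsRoot y ∧ ∀ z, A.charpoly.IsRoot z → y ≤ z

/-- `y` is the largest eigenvalue of `A`. -/
def IsLamMax {α : Type*} [Fintype α] [DecidableEq α] (A : Matrix α α ℝ) (y : ℝ) : Prop :=
  A.charpoly.IsRoot y ∧ ∀ z, A.charpoly.IsRoot z → z ≤ y

variable {n : Type*} [Fintype n] [DecidableEq n]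

lemma eval_charpoly' (A : Matrix n n ℝ) (z : ℝ) :
    A.charpoly.eval z = (z • (1 : Matrix n n ℝ) - A).det := by
  rw [Matrix.charpoly, ← Polynomial.coe_evalRingHom, RingHom.map_det]
  rw [RingHom.mapMatrix_apply]
  congr 1
  ext i j
  by_cases h : i = j <;>
    simp [h, charmatrix_apply, Matrix.sub_apply, Matrix.one_apply, Matrix.smul_apply,
      Matrix.diagonal_apply]

lemma isRoot_charpoly_iff' (A : Matrix n n ℝ) (z : ℝ) :
    A.charpoly.IsRoot z ↔ ∃ v, v ≠ 0 ∧ A *ᵥ v = z • v := by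
  rw [IsRoot, eval_charpoly', ← Matrix.exists_mulVec_eq_zero_iff]
  refine exists_congr fun v => and_congr_right fun hv => ?_
  rw [Matrix.sub_mulVec, Matrix.smul_mulVec, Matrix.one_mulVec, sub_eq_zero]
  exact eq_comm

lemma isRoot_charpoly_iff_mem' {A : Matrix n n ℝ} (hA : A.IsHermitian) (z : ℝ) :
    A.charpoly.IsRoot z ↔ z ∈ Set.range hA.eigenvalues := by
  rw [← hA.spectrum_real_eq_range_eigenvalues, spectrum.mem_iff, Matrix.isUnit_iff_isUnit_det,
    isUnit_iff_ne_zero, not_ne_iff, Algebra.algebraMap_eq_smul_one, IsRoot, eval_charpoly']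

lemma rayleigh' {A : Matrix n n ℝ} (hA : A.IsHermitian) {b : ℝ}
    (hb : ∀ z, A.charpoly.IsRoot z → z ≤ b) (x : n → ℝ) :
    x ⬝ᵥ (A *ᵥ x) ≤ b * (x ⬝ᵥ x) ∧
      (x ⬝ᵥ (A *ᵥ x) = b * (x ⬝ᵥ x) → A *ᵥ x = b • x) := by
  classical
  set U : Matrix n n ℝ := (hA.eigenvectorUnitary : Matrix n n ℝ) with hU
  have h1 : star U * U = 1 := Unitary.coe_star_mul_self hA.eigenvectorUnitary
  have h2 : U * star U = 1 := Unitary.coe_mul_star_self hA.eigenvectorUnitary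
  set ev := hA.eigenvalues with hev
  have hDg : Matrix.diagonal (RCLike.ofReal ∘ ev) = Matrix.diagonal ev := by
    congr 1
  have hspec : A = U * Matrix.diagonal ev * star U := by
    conv_lhs => rw [hA.spectral_theorem]
    rw [Unitary.conjStarAlgAut_apply]
    exact congrArg (fun D => U * D * star U) hDg
  set y := star U *ᵥ x with hy
  have hx : x = U *ᵥ y := by rw [hy, Matrix.mulVec_mulVec, h2, Matrix.one_mulVec]
  have hUw : ∀ w : n → ℝ, x ⬝ᵥ (U *ᵥ w) = y ⬝ᵥ w := by
    intro w
    rw [Matrix.dotProduct_mulVec, hy, Matrix.star_eq_conjTranspose,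
      Matrix.conjTranspose_eq_transpose_of_trivial, Matrix.mulVec_transpose]
  have hAx : A *ᵥ x = U *ᵥ (Matrix.diagonal ev *ᵥ y) := by
    rw [hspec, ← Matrix.mulVec_mulVec, ← Matrix.mulVec_mulVec]
  have key1 : x ⬝ᵥ (A *ᵥ x) = ∑ i, ev i * (y i * y i) := by
    rw [hAx, hUw]
    simp [dotProduct, Matrix.mulVec_diagonal]
    ring_nf
    exact Finset.sum_congr rfl fun i _ => by ring
  have key2 : x ⬝ᵥ x = ∑ i, y i * y i :=
    calc x ⬝ᵥ x = x ⬝ᵥ (U *ᵥ y) := by rw [← hx]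
    _ = y ⬝ᵥ y := hUw y
  have hev_le : ∀ i, ev i ≤ b := fun i =>
    hb _ ((isRoot_charpoly_iff_mem' hA _).2 ⟨i, rfl⟩)
  have hterm : ∀ i ∈ Finset.univ, ev i * (y i * y i) ≤ b * (y i * y i) := by
    intro i _
    exact mul_le_mul_of_nonneg_right (hev_le i) (mul_self_nonneg _)
  constructor
  · rw [key1, key2, Finset.mul_sum]
    exact Finset.sum_le_sum hterm
  · intro heq
    have heq' : ∑ i, ev i * (y i * y i) = ∑ i, b * (y i * y i) := by
      rw [← key1, heq, key2, Finset.mul_sum]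
    have hall := (Finset.sum_eq_sum_iff_of_le hterm).1 heq'
    have hDy : Matrix.diagonal ev *ᵥ y = b • y := by
      funext i
      rcases eq_or_ne (y i) 0 with h0 | h0
      · simp [Matrix.mulVec_diagonal, h0]
      · have hev' : ev i = b := by
          have h1 := hall i (Finset.mem_univ i)
          rw [← mul_assoc, ← mul_assoc] at h1
          exact mul_right_cancel₀ h0 (mul_right_cancel₀ h0 h1)
        simp [Matrix.mulVec_diagonal, hev', Pi.smul_apply]
    rw [hAx, hDy, Matrix.mulVec_smul, ← hx]

lemma exists_isLamMax' [Nonempty n] {A : Matrix n n ℝ} (hA : A.IsHermitian) :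
    ∃ b, IsLamMax A b := by
  obtain ⟨i₀, -, hmax⟩ := Finset.exists_max_image Finset.univ hA.eigenvalues
    ⟨Classical.arbitrary n, Finset.mem_univ _⟩
  refine ⟨hA.eigenvalues i₀, (isRoot_charpoly_iff_mem' hA _).2 ⟨i₀, rfl⟩, fun z hz => ?_⟩
  obtain ⟨j, rfl⟩ := (isRoot_charpoly_iff_mem' hA _).1 hz
  exact hmax j (Finset.mem_univ j)

lemma exists_isLamMin' [Nonempty n] {A : Matrix n n ℝ} (hA : A.IsHermitian) :
    ∃ a, IsLamMin A a := by
  obtain ⟨i₀, -, hmin⟩ := Finset.exists_min_image Finset.univ hA.eigenvalues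
    ⟨Classical.arbitrary n, Finset.mem_univ _⟩
  refine ⟨hA.eigenvalues i₀, (isRoot_charpoly_iff_mem' hA _).2 ⟨i₀, rfl⟩, fun z hz => ?_⟩
  obtain ⟨j, rfl⟩ := (isRoot_charpoly_iff_mem' hA _).1 hz
  exact hmin j (Finset.mem_univ j)

open SimpleGraph in
lemma tree_signature {α : Type*} [DecidableEq α] {G : SimpleGraph α} (hG : G.IsTree)
    {A : Matrix α α ℝ} (hA : A.IsSymm) (hm : MatchesGraph A G) (r : α) :
    ∃ d : α → ℝ, d r = 1 ∧ (∀ v, d v = 1 ∨ d v = -1) ∧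
      ∀ u v, u ≠ v → 0 ≤ d u * d v * A u v := by
  classical
  set f : Sym2 α → ℝ := Sym2.lift ⟨fun u v => if 0 < A u v then 1 else -1,
    fun u v => by simp only []; rw [hA.apply u v]⟩ with hfdef
  have hf : ∀ e, f e = 1 ∨ f e = -1 := Sym2.ind fun u v => by
    by_cases h : 0 < A u v <;> simp [hfdef, h]
  have hfmul : ∀ u v, G.Adj u v → 0 ≤ f (s(u, v)) * A u v := by
    intro u v hadj
    by_cases h : 0 < A u v
    · simp [hfdef, h]; positivity
    · simp only [hfdef, Sym2.lift_mk, h, if_false]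
      push_neg at h
      nlinarith
  set P : ∀ v, G.Walk r v := fun v => (hG.existsUnique_path r v).choose with hPdef
  have hP : ∀ v, (P v).IsPath := fun v => (hG.existsUnique_path r v).choose_spec.1
  have hPu : ∀ v (q : G.Walk r v), q.IsPath → q = P v := fun v q hq =>
    (hG.existsUnique_path r v).choose_spec.2 q hq
  set d : α → ℝ := fun v => ((P v).edges.map f).prod with hddef
  have hprodpm : ∀ l : List (Sym2 α), (l.map f).prod = 1 ∨ (l.map f).prod = -1 := by
    intro l
    induction l with
    | nil => left; simp
    | cons e t ih => rcases hf e with h | h <;> rcases ih with h' | h' <;>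
        simp [List.map_cons, List.prod_cons, h, h']
  have hdpm : ∀ v, d v = 1 ∨ d v = -1 := fun v => hprodpm _
  have hdsq : ∀ v, d v * d v = 1 := by
    intro v; rcases hdpm v with h | h <;> rw [h] <;> norm_num
  have hd1 : d r = 1 := by
    have : (Walk.nil : G.Walk r r) = P r := hPu r Walk.nil Walk.IsPath.nil
    simp [hddef, ← this]
  have hadj : ∀ u v (h : G.Adj u v),
      d v = d u * f (s(u, v)) ∨ d u = d v * f (s(u, v)) := by
    intro u v h
    by_cases hv : v ∈ (P u).support
    · right
      have ht := (hP u).takeUntil hv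
      have hq : (P u).takeUntil v hv = P v := hPu v _ ht
      have hcp : (Walk.cons h.symm Walk.nil : G.Walk v u).IsPath := by
        simp [Walk.cons_isPath_iff, h.ne']
      have hsingle : (P u).dropUntil v hv = Walk.cons h.symm Walk.nil :=
        (hG.existsUnique_path v u).unique ((hP u).dropUntil hv) hcp
      have hspec := ((P u).take_spec hv).symm
      rw [hddef]
      simp only
      rw [hspec, Walk.edges_append, hq, hsingle]
      simp [Sym2.eq_swap, mul_comm]
    · left
      have hcp : ((P u).concat h).IsPath := by
        rw [← Walk.isPath_reverse_iff, Walk.reverse_concat, Walk.cons_isPath_iff]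
        exact ⟨(hP u).reverse, by simpa [Walk.support_reverse] using hv⟩
      have : (P u).concat h = P v := hPu v _ hcp
      rw [hddef]
      simp only
      rw [← this, Walk.edges_concat]
      simp
  refine ⟨d, hd1, hdpm, fun u v huv => ?_⟩
  by_cases hGadj : G.Adj u v
  · rcases hadj u v hGadj with he | he
    · rw [he]
      have : d u * (d u * f (s(u, v))) * A u v
          = (d u * d u) * (f (s(u, v)) * A u v) := by ring
      rw [this, hdsq, one_mul]
      exact hfmul u v hGadj
    · rw [he]
      have : d v * f (s(u, v)) * d v * A u v
          = (d v * d v) * (f (s(u, v)) * A u v) := by ring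
      rw [this, hdsq, one_mul]
      exact hfmul u v hGadj
  · have : A u v = 0 := by
      by_contra h0
      exact hGadj ((hm u v huv).1 h0)
    rw [this, mul_zero]

section odot
variable {p : ℕ} {V : Fin (p + 1) → Type} [∀ i, Fintype (V i)] [∀ i, DecidableEq (V i)]
  (Ms : ∀ i, Matrix (V i) (V i) ℝ) (r : ∀ i, V i) (δ : ℝ)

lemma odot_same (i : Fin (p + 1)) (u v : V i) :
    odotMat Ms r δ ⟨i, u⟩ ⟨i, v⟩ = Ms i u v := by
  simp [odotMat]

lemma odot_root0 {j : Fin (p + 1)} (hj : j ≠ 0) (v : V j) :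
    odotMat Ms r δ ⟨0, r 0⟩ ⟨j, v⟩ = if v = r j then δ else 0 := by
  have h0j : (0 : Fin (p + 1)) ≠ j := fun h => hj h.symm
  simp [odotMat, h0j, hj, Sigma.mk.inj_iff]

lemma odot_root0' {j : Fin (p + 1)} (hj : j ≠ 0) (v : V j) :
    odotMat Ms r δ ⟨j, v⟩ ⟨0, r 0⟩ = if v = r j then δ else 0 := by
  have h0j : (0 : Fin (p + 1)) ≠ j := fun h => hj h.symm
  simp [odotMat, h0j, hj, Sigma.mk.inj_iff]

lemma odot_cross_zero {i j : Fin (p + 1)} (hi : i ≠ 0) (hj : j ≠ 0) (hij : i ≠ j)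
    (u : V i) (v : V j) : odotMat Ms r δ ⟨i, u⟩ ⟨j, v⟩ = 0 := by
  simp [odotMat, hi, hj, hij, Sigma.mk.inj_iff]

lemma odot_cross_zero0 {j : Fin (p + 1)} (hj : j ≠ 0) {u : V 0} (hu : u ≠ r 0) (v : V j) :
    odotMat Ms r δ ⟨0, u⟩ ⟨j, v⟩ = 0 := by
  have h0j : (0 : Fin (p + 1)) ≠ j := fun h => hj h.symm
  simp [odotMat, h0j, hj, hu, Sigma.mk.inj_iff]

lemma odot_cross_zero0' {j : Fin (p + 1)} (hj : j ≠ 0) {u : V 0} (hu : u ≠ r 0) (v : V j) :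
    odotMat Ms r δ ⟨j, v⟩ ⟨0, u⟩ = 0 := by
  have h0j : (0 : Fin (p + 1)) ≠ j := fun h => hj h.symm
  simp [odotMat, h0j, hj, hu, Sigma.mk.inj_iff]

lemma odot_isSymm (hsym : ∀ i, (Ms i).IsSymm) : (odotMat Ms r δ).IsSymm := by
  apply Matrix.IsSymm.ext
  rintro ⟨i, u⟩ ⟨j, v⟩
  by_cases h : i = j
  · subst h
    rw [odot_same, odot_same]
    exact (hsym i).apply u v
  · simp only [odotMat]
    rw [dif_neg (Ne.symm h), dif_neg h]
    split_ifs <;> tauto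

lemma odot_isHermitian (hsym : ∀ i, (Ms i).IsSymm) : (odotMat Ms r δ).IsHermitian :=
  ((odotMat Ms r δ).conjTranspose_eq_transpose_of_trivial).trans (odot_isSymm Ms r δ hsym).eq

lemma odot_neg : odotMat (fun i => -(Ms i)) r (-δ) = -(odotMat Ms r δ) := by
  funext a b
  simp only [odotMat, Matrix.neg_apply, Pi.neg_apply]
  split_ifs <;> simp

end odot

set_option maxHeartbeats 1000000 in
lemma key {p : ℕ} (hp : 1 ≤ p) {V : Fin (p + 1) → Type} [∀ i, Fintype (V i)]
    [∀ i, DecidableEq (V i)] (G : ∀ i, SimpleGraph (V i)) (hT : ∀ i, (G i).IsTree)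
    (r : ∀ i, V i) (Ms : ∀ i, Matrix (V i) (V i) ℝ) (hsym : ∀ i, (Ms i).IsSymm)
    (hmatch : ∀ i, MatchesGraph (Ms i) (G i)) (δ : ℝ) (hδ : δ ≠ 0)
    (ℓ : Fin (p + 1)) (lam : ℝ) (hlam : ((Ms ℓ).charpoly).IsRoot lam)
    {b : ℝ} (hb : IsLamMax (odotMat Ms r δ) b) : lam < b := by
  classical
  set M := odotMat Ms r δ with hMdef
  have hMh : M.IsHermitian := odot_isHermitian Ms r δ hsym
  obtain ⟨x, hx0, hxe⟩ := (isRoot_charpoly_iff' _ _).mp hlam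
  set w : (Σ i, V i) → ℝ := fun a => if h : a.1 = ℓ then x (h ▸ a.2) else 0 with hwdef
  have hwblock : ∀ u : V ℓ, w ⟨ℓ, u⟩ = x u := fun u => by simp [hwdef]
  have hwoff : ∀ (i) (_ : i ≠ ℓ) (u : V i), w ⟨i, u⟩ = 0 := fun i hi u => by
    simp [hwdef, hi]
  have sigma_sum : ∀ f : (Σ i, V i) → ℝ, ∑ a, f a = ∑ j, ∑ v, f ⟨j, v⟩ := by
    intro f
    rw [← Finset.univ_sigma_univ, Finset.sum_sigma]
  have hMw : ∀ u : V ℓ, (M *ᵥ w) ⟨ℓ, u⟩ = lam * x u := by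
    intro u
    have e1 : (M *ᵥ w) ⟨ℓ, u⟩ = ∑ j, ∑ v, M ⟨ℓ, u⟩ ⟨j, v⟩ * w ⟨j, v⟩ := by
      rw [Matrix.mulVec, dotProduct, sigma_sum]
    rw [e1, Finset.sum_eq_single_of_mem ℓ (Finset.mem_univ ℓ) (fun j _ hj => by
      apply Finset.sum_eq_zero
      intro v _
      rw [hwoff j hj, mul_zero])]
    have e2 : ∀ v, M ⟨ℓ, u⟩ ⟨ℓ, v⟩ * w ⟨ℓ, v⟩ = Ms ℓ u v * x v := fun v => by
      rw [hMdef, odot_same, hwblock]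
    rw [Finset.sum_congr rfl fun v _ => e2 v]
    have := congrFun hxe u
    rw [Matrix.mulVec, dotProduct] at this
    rw [this, Pi.smul_apply, smul_eq_mul]
  have hdotw : ∀ z : (Σ i, V i) → ℝ, w ⬝ᵥ z = ∑ v, x v * z ⟨ℓ, v⟩ := by
    intro z
    rw [dotProduct, sigma_sum]
    rw [Finset.sum_eq_single_of_mem ℓ (Finset.mem_univ ℓ) (fun j _ hj => by
      apply Finset.sum_eq_zero
      intro v _
      rw [hwoff j hj, zero_mul])]
    exact Finset.sum_congr rfl fun v _ => by rw [hwblock]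
  have hww : w ⬝ᵥ w = x ⬝ᵥ x := by
    rw [hdotw]
    exact Finset.sum_congr rfl fun v _ => by rw [hwblock]
  have hdotMw : w ⬝ᵥ (M *ᵥ w) = lam * (x ⬝ᵥ x) := by
    rw [hdotw]
    rw [Finset.sum_congr rfl fun v _ => by rw [hMw v]]
    rw [dotProduct, Finset.mul_sum]
    exact Finset.sum_congr rfl fun v _ => by ring
  have hxx : 0 < x ⬝ᵥ x := by
    obtain ⟨v0, hv0⟩ := Function.ne_iff.mp hx0
    rw [dotProduct]
    exact Finset.sum_pos' (fun i _ => mul_self_nonneg _)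
      ⟨v0, Finset.mem_univ v0, mul_self_pos.mpr hv0⟩
  have weak : lam ≤ b := by
    have h1 := (rayleigh' hMh hb.2 w).1
    rw [hdotMw, hww] at h1
    exact le_of_mul_le_mul_right h1 hxx
  rcases lt_or_eq_of_le weak with hlt | heq
  · exact hlt
  exfalso
  subst heq
  -- now the max eigenvalue is lam itself
  have hMww : M *ᵥ w = lam • w := by
    apply (rayleigh' hMh hb.2 w).2
    rw [hdotMw, hww]
  -- signatures
  choose ds hds1 hds2 hds3 using fun i => tree_signature (hT i) (hsym i) (hmatch i) (r i)
  set s : Fin (p + 1) → ℝ := fun i => if i = 0 then 1 else if 0 < δ then 1 else -1 with hsdef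
  set D : (Σ i, V i) → ℝ := fun a => s a.1 * ds a.1 a.2 with hDdef
  have hspm : ∀ i, s i = 1 ∨ s i = -1 := by
    intro i; rw [hsdef]; dsimp only; split_ifs <;> simp
  have hDpm : ∀ a, D a = 1 ∨ D a = -1 := by
    intro a
    rcases hspm a.1 with h | h <;> rcases hds2 a.1 a.2 with h' | h' <;>
      rw [hDdef] <;> dsimp only <;> rw [h, h'] <;> norm_num
  have hDsq : ∀ a, D a * D a = 1 := by
    intro a; rcases hDpm a with h | h <;> rw [h] <;> norm_num
  have hD0 : ∀ a, D a ≠ 0 := by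
    intro a; rcases hDpm a with h | h <;> rw [h] <;> norm_num
  set M' : Matrix (Σ i, V i) (Σ i, V i) ℝ := fun a c => D a * D c * M a c with hM'def
  have hMsymm : M.IsSymm := odot_isSymm Ms r δ hsym
  have hM'h : M'.IsHermitian := by
    refine (M'.conjTranspose_eq_transpose_of_trivial).trans (Matrix.IsSymm.ext fun a c => ?_).eq
    rw [hM'def]
    dsimp only
    rw [hMsymm.apply a c]
    ring
  have hM'roots : ∀ z, M'.charpoly.IsRoot z → z ≤ lam := by
    intro z hz
    obtain ⟨v, hv0, hve⟩ := (isRoot_charpoly_iff' _ _).mp hz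
    refine hb.2 z ((isRoot_charpoly_iff' _ _).mpr ⟨fun a => D a * v a, ?_, ?_⟩)
    · intro hc
      apply hv0
      funext a
      have := congrFun hc a
      dsimp at this
      rcases mul_eq_zero.mp this with h | h
      · exact absurd h (hD0 a)
      · exact h
    · funext a
      have hva := congrFun hve a
      rw [Matrix.mulVec, dotProduct] at hva ⊢
      have : ∑ c, M a c * (D c * v c) = D a * ∑ c, M' a c * v c := by
        rw [Finset.mul_sum]
        refine Finset.sum_congr rfl fun c _ => ?_
        rw [show M' a c = D a * D c * M a c from rfl]
        have h2 : D a * (D a * D c * M a c * v c) = (D a * D a) * (D c * (M a c * v c)) := by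
          ring
        rw [h2, hDsq a, one_mul]
        ring
      rw [this, hva, Pi.smul_apply, Pi.smul_apply, smul_eq_mul, smul_eq_mul]
      ring
  set w' : (Σ i, V i) → ℝ := fun a => D a * w a with hw'def
  have hM'w' : M' *ᵥ w' = lam • w' := by
    funext a
    have hwa := congrFun hMww a
    rw [Matrix.mulVec, dotProduct] at hwa ⊢
    have : ∑ c, M' a c * w' c = D a * ∑ c, M a c * w c := by
      rw [Finset.mul_sum]
      refine Finset.sum_congr rfl fun c _ => ?_
      rw [show M' a c = D a * D c * M a c from rfl, show w' c = D c * w c from rfl]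
      have h2 : D a * D c * M a c * (D c * w c) = (D c * D c) * (D a * (M a c * w c)) := by ring
      rw [h2, hDsq c, one_mul]
    rw [this, hwa, Pi.smul_apply, Pi.smul_apply, smul_eq_mul, smul_eq_mul, hw'def]
    ring
  set u : (Σ i, V i) → ℝ := fun a => |w' a| with hudef
  have huw2 : ∀ a, u a * u a = w' a * w' a := fun a => abs_mul_abs_self _
  -- off-diagonal nonnegativity of M'
  have hs_ne : ∀ j, j ≠ 0 → s j * δ = |δ| := by
    intro j hj
    have : s j = if 0 < δ then 1 else -1 := by rw [hsdef]; exact if_neg hj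
    rw [this]
    rcases lt_trichotomy 0 δ with h | h | h
    · rw [if_pos h, one_mul, abs_of_pos h]
    · exact absurd h.symm hδ
    · rw [if_neg (by linarith), abs_of_neg h]; ring
  have hDmk : ∀ (i) (u : V i), D ⟨i, u⟩ = s i * ds i u := fun _ _ => rfl
  have hDroot : ∀ j, D ⟨j, r j⟩ = s j := fun j => by rw [hDmk, hds1 j, mul_one]
  have hs00 : s 0 = 1 := by rw [hsdef]; simp
  have hM'mk : ∀ a c, M' a c = D a * D c * M a c := fun _ _ => rfl
  have hM'nn : ∀ a c, a ≠ c → 0 ≤ M' a c := by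
    rintro ⟨i, uu⟩ ⟨j, vv⟩ hne
    rw [hM'mk]
    by_cases hij : i = j
    · subst hij
      have huv : uu ≠ vv := fun h => hne (by rw [h])
      rw [hMdef, odot_same, hDmk, hDmk]
      rcases hspm i with h | h <;> rw [h] <;> nlinarith [hds3 i uu vv huv]
    · by_cases hi0 : i = 0
      · subst hi0
        have hj0 : j ≠ 0 := fun h => hij h.symm
        by_cases hu0 : uu = r 0
        · subst hu0
          rw [hMdef, odot_root0 Ms r δ hj0]
          by_cases hv0 : vv = r j
          · subst hv0
            rw [if_pos rfl, hDroot, hDroot, hs00, one_mul, hs_ne j hj0]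
            exact abs_nonneg δ
          · rw [if_neg hv0, mul_zero]
        · rw [hMdef, odot_cross_zero0 Ms r δ hj0 hu0, mul_zero]
      · by_cases hj0 : j = 0
        · subst hj0
          by_cases hv0 : vv = r 0
          · subst hv0
            rw [hMdef, odot_root0' Ms r δ hi0 uu]
            by_cases hu0 : uu = r i
            · subst hu0
              rw [if_pos rfl, hDroot, hDroot, hs00, mul_one, hs_ne i hi0]
              exact abs_nonneg δ
            · rw [if_neg hu0, mul_zero]
          · rw [hMdef, odot_cross_zero0' Ms r δ hi0 hv0, mul_zero]
        · rw [hMdef, odot_cross_zero Ms r δ hi0 hj0 hij, mul_zero]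
  -- Rayleigh equality for u
  have hray := rayleigh' hM'h hM'roots
  have hge : lam * (u ⬝ᵥ u) ≤ u ⬝ᵥ (M' *ᵥ u) := by
    have e1 : w' ⬝ᵥ (M' *ᵥ w') = lam * (w' ⬝ᵥ w') := by
      rw [hM'w', dotProduct_smul, smul_eq_mul]
    have e2 : u ⬝ᵥ u = w' ⬝ᵥ w' := Finset.sum_congr rfl fun a _ => huw2 a
    rw [e2, ← e1]
    have expand : ∀ z : (Σ i, V i) → ℝ, z ⬝ᵥ (M' *ᵥ z) = ∑ a, ∑ c, z a * (M' a c * z c) := by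
      intro z
      rw [dotProduct]
      exact Finset.sum_congr rfl fun a _ => by
        rw [Matrix.mulVec, dotProduct, Finset.mul_sum]
    rw [expand, expand]
    refine Finset.sum_le_sum fun a _ => Finset.sum_le_sum fun c _ => ?_
    by_cases hac : a = c
    · subst hac
      exact le_of_eq (by linear_combination (-(M' a a)) * huw2 a)
    · have h1 : w' a * (M' a c * w' c) = M' a c * (w' a * w' c) := by ring
      have h2 : u a * (M' a c * u c) = M' a c * (u a * u c) := by ring
      rw [h1, h2]
      apply mul_le_mul_of_nonneg_left _ (hM'nn a c hac)
      calc w' a * w' c ≤ |w' a * w' c| := le_abs_self _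
      _ = u a * u c := by
          rw [show u a = |w' a| from rfl, show u c = |w' c| from rfl, abs_mul]
  have heq2 : u ⬝ᵥ (M' *ᵥ u) = lam * (u ⬝ᵥ u) := le_antisymm ((hray u).1) hge
  have hM'u : M' *ᵥ u = lam • u := (hray u).2 heq2
  -- propagation of zeros
  have prop : ∀ a, u a = 0 → ∀ c, M' a c ≠ 0 → u c = 0 := by
    intro a ha c hMc
    have hsum : ∑ c, M' a c * u c = 0 := by
      have := congrFun hM'u a
      rw [Matrix.mulVec, dotProduct] at this
      rw [this, Pi.smul_apply, smul_eq_mul, ha, mul_zero]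
    have hterm : ∀ c' ∈ Finset.univ, (0:ℝ) ≤ M' a c' * u c' := by
      intro c' _
      by_cases hc : a = c'
      · subst hc; rw [ha, mul_zero]
      · exact mul_nonneg (hM'nn a c' hc) (abs_nonneg _)
    have := (Finset.sum_eq_zero_iff_of_nonneg hterm).1 hsum c (Finset.mem_univ c)
    rcases mul_eq_zero.mp this with h | h
    · exact absurd h hMc
    · exact h
  have walkprop : ∀ (j) (x0 y0 : V j), (G j).Walk x0 y0 → u ⟨j, x0⟩ = 0 → u ⟨j, y0⟩ = 0 := by
    intro j x0 y0 wk
    induction wk with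
    | nil => exact id
    | cons hadj q ih =>
      intro h0
      apply ih
      apply prop _ h0
      rw [hM'mk, hMdef, odot_same]
      exact mul_ne_zero (mul_ne_zero (hD0 _) (hD0 _)) ((hmatch j _ _ hadj.ne).2 hadj)
  have humk : ∀ a, u a = |D a * w a| := fun _ => rfl
  have hstart : ∀ (j) (_ : j ≠ ℓ) (v : V j), u ⟨j, v⟩ = 0 := by
    intro j hj v
    rw [humk, hwoff j hj, mul_zero, abs_zero]
  have cross_ne : ∀ (j) (_ : j ≠ 0), M' ⟨j, r j⟩ ⟨0, r 0⟩ ≠ 0 ∧ M' ⟨0, r 0⟩ ⟨j, r j⟩ ≠ 0 := by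
    intro j hj
    constructor
    · rw [hM'mk, hMdef, odot_root0' Ms r δ hj, if_pos rfl]
      exact mul_ne_zero (mul_ne_zero (hD0 _) (hD0 _)) hδ
    · rw [hM'mk, hMdef, odot_root0 Ms r δ hj, if_pos rfl]
      exact mul_ne_zero (mul_ne_zero (hD0 _) (hD0 _)) hδ
  have hroot0 : u ⟨0, r 0⟩ = 0 := by
    by_cases hl : ℓ = 0
    · have hj1 : (⟨1, by omega⟩ : Fin (p + 1)) ≠ 0 := by
        intro h
        simpa using congrArg Fin.val h
      have hj1l : (⟨1, by omega⟩ : Fin (p + 1)) ≠ ℓ := by rw [hl]; exact hj1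
      have hu1 : u ⟨⟨1, by omega⟩, r ⟨1, by omega⟩⟩ = 0 := hstart _ hj1l _
      exact prop _ hu1 _ (cross_ne _ hj1).1
    · exact hstart 0 (fun h => hl h.symm) _
  have hroots : ∀ j, u ⟨j, r j⟩ = 0 := by
    intro j
    by_cases hj : j = 0
    · subst hj; exact hroot0
    · exact prop _ hroot0 _ (cross_ne j hj).2
  have hzero : ∀ a, u a = 0 := by
    rintro ⟨j, v⟩
    exact walkprop j (r j) v ((hT j).isConnected.preconnected (r j) v).some (hroots j)
  obtain ⟨v0, hv0⟩ := Function.ne_iff.mp hx0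
  apply hv0
  have := hzero ⟨ℓ, v0⟩
  rw [humk, hwblock, abs_eq_zero] at this
  rcases mul_eq_zero.mp this with h | h
  · exact absurd h (hD0 _)
  · exact h
lemma isRoot_neg' (A : Matrix n n ℝ) (z : ℝ) :
    (-A).charpoly.IsRoot z ↔ A.charpoly.IsRoot (-z) := by
  rw [isRoot_charpoly_iff', isRoot_charpoly_iff']
  constructor
  · rintro ⟨v, h0, he⟩
    refine ⟨v, h0, ?_⟩
    rw [Matrix.neg_mulVec] at he
    rw [neg_smul, ← he, neg_neg]
  · rintro ⟨v, h0, he⟩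
    refine ⟨v, h0, ?_⟩
    rw [Matrix.neg_mulVec, he, neg_smul, neg_neg]

/-- Every eigenvalue of one of the blocks `Ms ℓ` lies strictly between the smallest
and the largest eigenvalue of the combined matrix. -/
theorem stmt5 {p : ℕ} (hp : 1 ≤ p) {V : Fin (p + 1) → Type} [∀ i, Fintype (V i)]
    [∀ i, DecidableEq (V i)] (G : ∀ i, SimpleGraph (V i)) (hT : ∀ i, (G i).IsTree)
    (r : ∀ i, V i) (Ms : ∀ i, Matrix (V i) (V i) ℝ) (hsym : ∀ i, (Ms i).IsSymm)
    (hmatch : ∀ i, MatchesGraph (Ms i) (G i)) (δ : ℝ) (hδ : δ ≠ 0)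
    (ℓ : Fin (p + 1)) (lam : ℝ) (hlam : ((Ms ℓ).charpoly).IsRoot lam) :
    ∃ a b : ℝ, IsLamMin (odotMat Ms r δ) a ∧ IsLamMax (odotMat Ms r δ) b ∧
      a < lam ∧ lam < b := by
  classical
  have hMh := odot_isHermitian Ms r δ hsym
  have hne : Nonempty (Σ i, V i) := ⟨⟨0, ((hT 0).isConnected).nonempty.some⟩⟩
  obtain ⟨a, ha⟩ := exists_isLamMin' hMh
  obtain ⟨b, hb⟩ := exists_isLamMax' hMh
  refine ⟨a, b, ha, hb, ?_, key hp G hT r Ms hsym hmatch δ hδ ℓ lam hlam hb⟩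
  have hsym' : ∀ i, (-(Ms i)).IsSymm := fun i => (hsym i).neg
  have hmatch' : ∀ i, MatchesGraph (-(Ms i)) (G i) := by
    intro i u v huv
    rw [Matrix.neg_apply, neg_ne_zero]
    exact hmatch i u v huv
  have hlam' : ((-(Ms ℓ)).charpoly).IsRoot (-lam) := by
    rw [isRoot_neg', neg_neg]
    exact hlam
  have hbneg : IsLamMax (odotMat (fun i => -(Ms i)) r (-δ)) (-a) := by
    rw [odot_neg]
    constructor
    · rw [isRoot_neg', neg_neg]
      exact ha.1
    · intro z hz
      rw [isRoot_neg'] at hz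
      have := ha.2 _ hz
      linarith
  have := key hp G hT r _ hsym' hmatch' (-δ) (neg_ne_zero.mpr hδ) ℓ (-lam) hlam' hbneg
  linarith
end
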